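/- arXiv:2010.10569 — 3 statements merged into one kernel-verified Lean document; each statement's English description precedes it below -/
import Mathlib

section
/- Monotonicity of the Beta CDF in its first parameter: for fixed β > 0 and y ∈ (0,1), if 0 < α₂ < α₁ then F^{Beta}_{α₁, β}(y) < F^{Beta}_{α₂, β}(y), i.e., increasing the first shape parameter strictly decreases the CDF. -/
open MeasureTheory Real intervalIntegral

/-- CDF of the Beta(a, b) distribution. -/
noncomputable def betaCDF (a b y : ℝ) : ℝ :=
  (∫ θ in (0:ℝ)..y, θ ^ (a - 1) * (1 - θ) ^ (b - 1)) /
    (∫ u in (0:ℝ)..1, u ^ (a - 1) * (1 - u) ^ (b - 1))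

lemma beta_integrand_intervalIntegrable {a b : ℝ} (ha : 0 < a) (hb : 0 < b) :
    IntervalIntegrable (fun θ : ℝ => θ ^ (a - 1) * (1 - θ) ^ (b - 1)) volume 0 1 := by
  have h1 : IntervalIntegrable (fun θ : ℝ => θ ^ (a - 1) * (1 - θ) ^ (b - 1))
      volume 0 (1/2) := by
    apply (intervalIntegrable_rpow' (by linarith : (-1:ℝ) < a - 1)).mul_continuousOn
    apply (continuousOn_const.sub continuousOn_id).rpow_const
    intro x hx
    left
    rw [Set.uIcc_of_le (by norm_num : (0:ℝ) ≤ 1/2)] at hx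
    have : x ≤ 1/2 := hx.2
    intro h; rw [Pi.sub_apply, sub_eq_zero] at h; simp only [id_eq] at h; linarith
  have h2 : IntervalIntegrable (fun θ : ℝ => θ ^ (a - 1) * (1 - θ) ^ (b - 1))
      volume (1/2) 1 := by
    have hi : IntervalIntegrable (fun θ : ℝ => (1 - θ) ^ (b - 1)) volume (1/2) 1 := by
      have := (intervalIntegrable_rpow' (by linarith : (-1:ℝ) < b - 1)
        (a := 0) (b := 1/2)).comp_sub_left 1
      norm_num at this
      exact this.symm
    apply hi.continuousOn_mul
    apply continuousOn_id.rpow_const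
    intro x hx
    left
    rw [Set.uIcc_of_le (by norm_num : (1/2:ℝ) ≤ 1)] at hx
    have : (1/2:ℝ) ≤ x := hx.1
    intro h; simp only [id_eq] at h; rw [h] at this; norm_num at this
  exact h1.trans h2

theorem betaCDF_strict_anti_in_first_param
    (α₁ α₂ β y : ℝ) (hβ : 0 < β) (hy : y ∈ Set.Ioo (0:ℝ) 1)
    (h₂ : 0 < α₂) (h₁₂ : α₂ < α₁) :
    betaCDF α₁ β y < betaCDF α₂ β y := by
  obtain ⟨hy0, hy1⟩ := hy
  have h₁ : 0 < α₁ := h₂.trans h₁₂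
  set w₁ : ℝ → ℝ := fun θ => θ ^ (α₁ - 1) * (1 - θ) ^ (β - 1) with hw₁
  set w₂ : ℝ → ℝ := fun θ => θ ^ (α₂ - 1) * (1 - θ) ^ (β - 1) with hw₂
  have hI₁ : IntervalIntegrable w₁ volume 0 1 := beta_integrand_intervalIntegrable h₁ hβ
  have hI₂ : IntervalIntegrable w₂ volume 0 1 := beta_integrand_intervalIntegrable h₂ hβ
  have hsubl : Set.uIcc (0:ℝ) y ⊆ Set.uIcc (0:ℝ) 1 := by
    rw [Set.uIcc_of_le hy0.le, Set.uIcc_of_le zero_le_one]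
    exact Set.Icc_subset_Icc le_rfl hy1.le
  have hsubr : Set.uIcc y (1:ℝ) ⊆ Set.uIcc (0:ℝ) 1 := by
    rw [Set.uIcc_of_le hy1.le, Set.uIcc_of_le zero_le_one]
    exact Set.Icc_subset_Icc hy0.le le_rfl
  have hI₁l : IntervalIntegrable w₁ volume 0 y := hI₁.mono_set hsubl
  have hI₂l : IntervalIntegrable w₂ volume 0 y := hI₂.mono_set hsubl
  have hI₁r : IntervalIntegrable w₁ volume y 1 := hI₁.mono_set hsubr
  have hI₂r : IntervalIntegrable w₂ volume y 1 := hI₂.mono_set hsubr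
  set A₁ := ∫ θ in (0:ℝ)..y, w₁ θ with hA₁
  set A₂ := ∫ θ in (0:ℝ)..y, w₂ θ with hA₂
  set G₁ := ∫ θ in y..(1:ℝ), w₁ θ with hG₁
  set G₂ := ∫ θ in y..(1:ℝ), w₂ θ with hG₂
  set δ := α₁ - α₂ with hδ
  have hδ0 : 0 < δ := by simp [hδ]; linarith
  -- positivity on subintervals
  have pos_on : ∀ a : ℝ, ∀ θ : ℝ, θ ∈ Set.Ioo (0:ℝ) 1 → 0 < θ ^ (a - 1) * (1 - θ) ^ (β - 1) := by
    intro a θ hθ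
    exact mul_pos (rpow_pos_of_pos hθ.1 _) (rpow_pos_of_pos (by linarith [hθ.2]) _)
  have hA₁pos : 0 < A₁ :=
    intervalIntegral_pos_of_pos_on hI₁l
      (fun θ hθ => pos_on α₁ θ ⟨hθ.1, hθ.2.trans hy1⟩) hy0
  have hA₂pos : 0 < A₂ :=
    intervalIntegral_pos_of_pos_on hI₂l
      (fun θ hθ => pos_on α₂ θ ⟨hθ.1, hθ.2.trans hy1⟩) hy0
  have hG₁pos : 0 < G₁ :=
    intervalIntegral_pos_of_pos_on hI₁r
      (fun θ hθ => pos_on α₁ θ ⟨hy0.trans hθ.1, hθ.2⟩) hy1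
  have hG₂pos : 0 < G₂ :=
    intervalIntegral_pos_of_pos_on hI₂r
      (fun θ hθ => pos_on α₂ θ ⟨hy0.trans hθ.1, hθ.2⟩) hy1
  -- key comparison on [0, y]: A₁ ≤ y^δ * A₂
  have hyδpos : 0 < y ^ δ := rpow_pos_of_pos hy0 _
  have key_left : A₁ ≤ y ^ δ * A₂ := by
    have h2 : IntervalIntegrable (fun θ => y ^ δ * w₂ θ) volume 0 y :=
      hI₂l.const_mul _
    rw [hA₁, hA₂, ← intervalIntegral.integral_const_mul]
    apply intervalIntegral.integral_mono_ae_restrict hy0.le hI₁l h2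
    have h0 : ∀ᵐ θ : ℝ, θ ≠ 0 := by
      rw [ae_iff]
      convert Real.volume_singleton (a := 0) using 2
      ext θ; simp
    filter_upwards [ae_restrict_of_ae h0, ae_restrict_mem measurableSet_Icc]
      with θ hθ0 hθmem
    have hθpos : 0 < θ := lt_of_le_of_ne hθmem.1 (Ne.symm hθ0)
    have hθy : θ ≤ y := hθmem.2
    have h1θ : (0:ℝ) ≤ 1 - θ := by nlinarith
    simp only [hw₁, hw₂]
    have : θ ^ (α₁ - 1) = θ ^ δ * θ ^ (α₂ - 1) := by
      rw [← rpow_add hθpos, hδ]; ring_nf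
    rw [this, mul_assoc]
    apply mul_le_mul_of_nonneg_right _ (mul_nonneg (rpow_nonneg hθpos.le _)
      (rpow_nonneg h1θ _))
    exact rpow_le_rpow hθpos.le hθy hδ0.le
  -- key strict comparison on [y, 1]: y^δ * G₂ < G₁
  have key_right : y ^ δ * G₂ < G₁ := by
    have h2 : IntervalIntegrable (fun θ => y ^ δ * w₂ θ) volume y 1 :=
      hI₂r.const_mul _
    have hd : IntervalIntegrable (fun θ => w₁ θ - y ^ δ * w₂ θ) volume y 1 :=
      hI₁r.sub h2
    have hpos : 0 < ∫ θ in y..(1:ℝ), (w₁ θ - y ^ δ * w₂ θ) := by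
      apply intervalIntegral_pos_of_pos_on hd _ hy1
      intro θ hθ
      have hθ0 : 0 < θ := hy0.trans hθ.1
      have h1θ : (0:ℝ) < 1 - θ := by linarith [hθ.2]
      have : θ ^ (α₁ - 1) = θ ^ δ * θ ^ (α₂ - 1) := by
        rw [← rpow_add hθ0, hδ]; ring_nf
      simp only [hw₁, hw₂]
      rw [this]
      nlinarith [rpow_lt_rpow hy0.le hθ.1 hδ0,
        mul_pos (rpow_pos_of_pos hθ0 (α₂ - 1)) (rpow_pos_of_pos h1θ (β - 1))]
    rw [intervalIntegral.integral_sub hI₁r h2, intervalIntegral.integral_const_mul] at hpos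
    linarith
  -- assemble
  have hsplit₁ : (∫ θ in (0:ℝ)..1, w₁ θ) = A₁ + G₁ :=
    (intervalIntegral.integral_add_adjacent_intervals hI₁l hI₁r).symm
  have hsplit₂ : (∫ θ in (0:ℝ)..1, w₂ θ) = A₂ + G₂ :=
    (intervalIntegral.integral_add_adjacent_intervals hI₂l hI₂r).symm
  have hB₁pos : 0 < A₁ + G₁ := by linarith
  have hB₂pos : 0 < A₂ + G₂ := by linarith
  unfold betaCDF
  rw [show (∫ θ in (0:ℝ)..y, θ ^ (α₁ - 1) * (1 - θ) ^ (β - 1)) = A₁ from rfl,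
    show (∫ θ in (0:ℝ)..y, θ ^ (α₂ - 1) * (1 - θ) ^ (β - 1)) = A₂ from rfl,
    show (∫ u in (0:ℝ)..1, u ^ (α₁ - 1) * (1 - u) ^ (β - 1)) = A₁ + G₁ from hsplit₁,
    show (∫ u in (0:ℝ)..1, u ^ (α₂ - 1) * (1 - u) ^ (β - 1)) = A₂ + G₂ from hsplit₂]
  rw [div_lt_div_iff₀ hB₁pos hB₂pos]
  have key : A₁ * G₂ < A₂ * G₁ := by
    calc A₁ * G₂ ≤ (y ^ δ * A₂) * G₂ :=
          mul_le_mul_of_nonneg_right key_left hG₂pos.le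
      _ = A₂ * (y ^ δ * G₂) := by ring
      _ < A₂ * G₁ := by exact mul_lt_mul_of_pos_left key_right hA₂pos
  nlinarith
end

section
/- Monotonicity of the Beta CDF in its second parameter: for fixed α > 0 and y ∈ (0,1), if 0 < β₂ < β₁ then F^{Beta}_{α, β₂}(y) < F^{Beta}_{α, β₁}(y), i.e., increasing the second shape parameter strictly increases the CDF. -/
open MeasureTheory Real intervalIntegral

lemma betaIntegrand_intervalIntegrable (a b : ℝ) (ha : 0 < a) (hb : 0 < b) :
    IntervalIntegrable (fun θ : ℝ => θ ^ (a - 1) * (1 - θ) ^ (b - 1)) volume 0 1 := by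
  have h := Complex.betaIntegral_convergent (u := (a : ℂ)) (v := (b : ℂ))
    (by simpa using ha) (by simpa using hb)
  have h1 : IntegrableOn (fun x : ℝ => (x : ℂ) ^ ((a : ℂ) - 1) * (1 - (x : ℂ)) ^ ((b : ℂ) - 1))
      (Set.Ioo (0:ℝ) 1) volume := by
    have := h.1
    exact this.mono_set Set.Ioo_subset_Ioc_self
  have heq : Set.EqOn
      (fun x : ℝ => (x : ℂ) ^ ((a : ℂ) - 1) * (1 - (x : ℂ)) ^ ((b : ℂ) - 1))
      (fun x : ℝ => ((x ^ (a - 1) * (1 - x) ^ (b - 1) : ℝ) : ℂ)) (Set.Ioo 0 1) := by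
    intro x hx
    simp only [Complex.ofReal_mul]
    rw [Complex.ofReal_cpow hx.1.le, Complex.ofReal_cpow (by linarith [hx.2] : (0:ℝ) ≤ 1 - x)]
    push_cast
    ring_nf
  have h2 : IntegrableOn (fun x : ℝ => ((x ^ (a - 1) * (1 - x) ^ (b - 1) : ℝ) : ℂ))
      (Set.Ioo (0:ℝ) 1) volume := h1.congr_fun heq measurableSet_Ioo
  have h3 : IntegrableOn (fun x : ℝ => x ^ (a - 1) * (1 - x) ^ (b - 1))
      (Set.Ioo (0:ℝ) 1) volume := by
    have h4 := h2.re
    simpa [IntegrableOn] using h4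
  rw [intervalIntegrable_iff_integrableOn_Ioc_of_le (by norm_num)]
  rwa [integrableOn_Ioc_iff_integrableOn_Ioo]

theorem betaCDF_strict_mono_in_second_param
    (α β₁ β₂ y : ℝ) (hα : 0 < α) (hy : y ∈ Set.Ioo (0:ℝ) 1)
    (h₂ : 0 < β₂) (h₁₂ : β₂ < β₁) :
    betaCDF α β₂ y < betaCDF α β₁ y := by
  obtain ⟨hy0, hy1⟩ := hy
  set δ : ℝ := β₁ - β₂ with hδdef
  have hδ : 0 < δ := by simp [hδdef]; linarith
  set c : ℝ := (1 - y) ^ δ with hcdef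
  have h1y : (0:ℝ) < 1 - y := by linarith
  have hc : 0 < c := rpow_pos_of_pos h1y δ
  set f₁ : ℝ → ℝ := fun θ => θ ^ (α - 1) * (1 - θ) ^ (β₁ - 1) with hf₁
  set f₂ : ℝ → ℝ := fun θ => θ ^ (α - 1) * (1 - θ) ^ (β₂ - 1) with hf₂
  have hβ₁ : 0 < β₁ := lt_trans h₂ h₁₂
  have I1 : IntervalIntegrable f₁ volume 0 1 := betaIntegrand_intervalIntegrable α β₁ hα hβ₁
  have I2 : IntervalIntegrable f₂ volume 0 1 := betaIntegrand_intervalIntegrable α β₂ hα h₂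
  have hsub1 : Set.uIcc (0:ℝ) y ⊆ Set.uIcc (0:ℝ) 1 := by
    rw [Set.uIcc_of_le hy0.le, Set.uIcc_of_le (by norm_num : (0:ℝ) ≤ 1)]
    exact Set.Icc_subset_Icc le_rfl hy1.le
  have hsub2 : Set.uIcc y (1:ℝ) ⊆ Set.uIcc (0:ℝ) 1 := by
    rw [Set.uIcc_of_le hy1.le, Set.uIcc_of_le (by norm_num : (0:ℝ) ≤ 1)]
    exact Set.Icc_subset_Icc hy0.le le_rfl
  have I1a : IntervalIntegrable f₁ volume 0 y := I1.mono_set hsub1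
  have I2a : IntervalIntegrable f₂ volume 0 y := I2.mono_set hsub1
  have I1b : IntervalIntegrable f₁ volume y 1 := I1.mono_set hsub2
  have I2b : IntervalIntegrable f₂ volume y 1 := I2.mono_set hsub2
  set A₁ : ℝ := ∫ θ in (0:ℝ)..y, f₁ θ with hA₁
  set A₂ : ℝ := ∫ θ in (0:ℝ)..y, f₂ θ with hA₂
  set B₁ : ℝ := ∫ θ in y..(1:ℝ), f₁ θ with hB₁
  set B₂ : ℝ := ∫ θ in y..(1:ℝ), f₂ θ with hB₂
  -- positivity of pieces
  have hposf : ∀ (b : ℝ) (θ : ℝ), 0 < θ → θ < 1 → 0 < θ ^ (α - 1) * (1 - θ) ^ (b - 1) := by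
    intro b θ h0 h1
    exact mul_pos (rpow_pos_of_pos h0 _) (rpow_pos_of_pos (by linarith) _)
  have hA₁pos : 0 < A₁ := intervalIntegral_pos_of_pos_on I1a
    (fun x hx => hposf β₁ x hx.1 (lt_trans hx.2 hy1)) hy0
  have hA₂pos : 0 < A₂ := intervalIntegral_pos_of_pos_on I2a
    (fun x hx => hposf β₂ x hx.1 (lt_trans hx.2 hy1)) hy0
  have hB₁pos : 0 < B₁ := intervalIntegral_pos_of_pos_on I1b
    (fun x hx => hposf β₁ x (lt_trans hy0 hx.1) hx.2) hy1
  have hB₂pos : 0 < B₂ := intervalIntegral_pos_of_pos_on I2b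
    (fun x hx => hposf β₂ x (lt_trans hy0 hx.1) hx.2) hy1
  -- factorization of f₁
  have hfact : ∀ θ : ℝ, θ < 1 → f₁ θ = f₂ θ * (1 - θ) ^ δ := by
    intro θ hθ
    have h1θ : (0:ℝ) < 1 - θ := by linarith
    simp only [hf₁, hf₂]
    rw [mul_assoc, ← rpow_add h1θ]
    rw [hδdef]; ring_nf
  -- key inequality (1): c * A₂ ≤ A₁
  have hA : c * A₂ ≤ A₁ := by
    have : (∫ θ in (0:ℝ)..y, c * f₂ θ) ≤ A₁ := by
      apply intervalIntegral.integral_mono_on hy0.le (I2a.const_mul c) I1a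
      intro θ hθ
      have hθ1 : θ < 1 := lt_of_le_of_lt hθ.2 hy1
      rw [hfact θ hθ1]
      have hle : c ≤ (1 - θ) ^ δ :=
        rpow_le_rpow h1y.le (by linarith [hθ.2]) hδ.le
      have hnn : 0 ≤ f₂ θ := by
        apply mul_nonneg (rpow_nonneg hθ.1 _) (rpow_nonneg (by linarith) _)
      nlinarith
    rwa [intervalIntegral.integral_const_mul] at this
  -- key inequality (2): B₁ < c * B₂
  have hB : B₁ < c * B₂ := by
    have hpos : 0 < ∫ θ in y..(1:ℝ), (c * f₂ θ - f₁ θ) := by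
      apply intervalIntegral_pos_of_pos_on ((I2b.const_mul c).sub I1b) _ hy1
      intro θ hθ
      have hθ0 : 0 < θ := lt_trans hy0 hθ.1
      have hθ1 : θ < 1 := hθ.2
      rw [hfact θ hθ1]
      have hlt : (1 - θ) ^ δ < c :=
        rpow_lt_rpow (by linarith) (by linarith [hθ.1]) hδ
      have hp : 0 < f₂ θ := hposf β₂ θ hθ0 hθ1
      nlinarith
    rw [intervalIntegral.integral_sub (I2b.const_mul c) I1b,
      intervalIntegral.integral_const_mul] at hpos
    linarith
  -- combine
  have hD₁ : (∫ u in (0:ℝ)..1, f₁ u) = A₁ + B₁ :=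
    (intervalIntegral.integral_add_adjacent_intervals I1a I1b).symm
  have hD₂ : (∫ u in (0:ℝ)..1, f₂ u) = A₂ + B₂ :=
    (intervalIntegral.integral_add_adjacent_intervals I2a I2b).symm
  have : betaCDF α β₁ y = A₁ / (A₁ + B₁) := by rw [betaCDF]; rw [hD₁]
  rw [this]
  have : betaCDF α β₂ y = A₂ / (A₂ + B₂) := by rw [betaCDF]; rw [hD₂]
  rw [this]
  rw [div_lt_div_iff₀ (by linarith) (by linarith)]
  nlinarith [mul_lt_mul_of_pos_left hB hA₂pos, mul_le_mul_of_nonneg_right hA hB₂pos.le]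
end

section
/- Geometric ergodicity bound for doubly stochastic matrices accumulated over time: if W is an N×N doubly stochastic matrix corresponding to a strongly connected network with second-largest singular value σ₂(W) < 1, then for every i and t, ∑_{τ=1}^{t} ∑_{j=1}^{N} |(W^{t-τ})_{ij} - 1/N| ≤ 4 log N / (1 - σ₂(W)). -/
open Matrix Real

/-- Second-largest singular value of a doubly stochastic matrix, characterized as
the largest gain of `W` on vectors orthogonal to the all-ones vector. -/
noncomputable def secondSingular {N : ℕ} (W : Matrix (Fin N) (Fin N) ℝ) : ℝ :=
  sSup {r | ∃ x : Fin N → ℝ, (∑ i, x i) = 0 ∧ (∑ i, (x i) ^ 2) = 1 ∧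
    r = Real.sqrt (∑ i, (W.mulVec x i) ^ 2)}

section A
variable {N : ℕ} (W : Matrix (Fin N) (Fin N) ℝ)

lemma sumsq_mulVec_le (hnonneg : ∀ i j, 0 ≤ W i j) (hrow : ∀ i, ∑ j, W i j = 1)
    (hcol : ∀ j, ∑ i, W i j = 1) (x : Fin N → ℝ) :
    ∑ i, (W.mulVec x i)^2 ≤ ∑ i, (x i)^2 := by
  have h1 : ∀ i, (W.mulVec x i)^2 ≤ ∑ j, W i j * (x j)^2 := by
    intro i
    have hcs := Finset.sum_mul_sq_le_sq_mul_sq Finset.univ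
      (fun j => Real.sqrt (W i j)) (fun j => Real.sqrt (W i j) * x j)
    have e1 : ∀ j, Real.sqrt (W i j) * (Real.sqrt (W i j) * x j) = W i j * x j := by
      intro j; rw [← mul_assoc, Real.mul_self_sqrt (hnonneg i j)]
    have e2 : ∀ j, Real.sqrt (W i j) ^ 2 = W i j := fun j => Real.sq_sqrt (hnonneg i j)
    have e3 : ∀ j, (Real.sqrt (W i j) * x j) ^ 2 = W i j * x j ^ 2 := by
      intro j; rw [mul_pow, e2]
    simp only [e1, e2, e3] at hcs
    calc (W.mulVec x i)^2 = (∑ j, W i j * x j)^2 := by rfl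
      _ ≤ (∑ j, W i j) * ∑ j, W i j * x j ^ 2 := hcs
      _ = ∑ j, W i j * x j ^ 2 := by rw [hrow i, one_mul]
  calc ∑ i, (W.mulVec x i)^2 ≤ ∑ i, ∑ j, W i j * (x j)^2 :=
        Finset.sum_le_sum fun i _ => h1 i
    _ = ∑ j, (∑ i, W i j) * (x j)^2 := by rw [Finset.sum_comm]; simp [Finset.sum_mul]
    _ = ∑ j, (x j)^2 := by simp [hcol]

lemma ss_bdd (hnonneg : ∀ i j, 0 ≤ W i j) (hrow : ∀ i, ∑ j, W i j = 1)
    (hcol : ∀ j, ∑ i, W i j = 1) :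
    BddAbove {r | ∃ x : Fin N → ℝ, (∑ i, x i) = 0 ∧ (∑ i, (x i) ^ 2) = 1 ∧
      r = Real.sqrt (∑ i, (W.mulVec x i) ^ 2)} := by
  refine ⟨1, ?_⟩
  rintro r ⟨x, -, hx2, rfl⟩
  have h := sumsq_mulVec_le W hnonneg hrow hcol x
  rw [hx2] at h
  calc Real.sqrt (∑ i, (W.mulVec x i)^2) ≤ Real.sqrt 1 := Real.sqrt_le_sqrt h
    _ = 1 := Real.sqrt_one

lemma ss_nonempty (hN : 2 ≤ N) :
    {r | ∃ x : Fin N → ℝ, (∑ i, x i) = 0 ∧ (∑ i, (x i) ^ 2) = 1 ∧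
      r = Real.sqrt (∑ i, (W.mulVec x i) ^ 2)}.Nonempty := by
  have hN0 : 0 < N := by omega
  set i0 : Fin N := ⟨0, by omega⟩
  set i1 : Fin N := ⟨1, by omega⟩
  have hne : i0 ≠ i1 := by simp [i0, i1, Fin.ext_iff]
  set c : ℝ := Real.sqrt (1/2)
  set x : Fin N → ℝ := fun j => if j = i0 then c else if j = i1 then -c else 0
  have hs : (∑ i, x i) = 0 := by
    have : ∀ j, x j = (if j = i0 then c else 0) + (if j = i1 then -c else 0) := by
      intro j
      by_cases h0 : j = i0
      · subst h0; simp [x, hne]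
      · by_cases h1 : j = i1
        · subst h1; simp [x, Ne.symm hne]
        · simp [x, h0, h1]
    simp only [this, Finset.sum_add_distrib, Finset.sum_ite_eq', Finset.mem_univ, if_true]
    ring
  have hsq : (∑ i, (x i)^2) = 1 := by
    have : ∀ j, (x j)^2 = (if j = i0 then c^2 else 0) + (if j = i1 then c^2 else 0) := by
      intro j
      by_cases h0 : j = i0
      · subst h0; simp [x, hne]
      · by_cases h1 : j = i1
        · subst h1; simp [x, Ne.symm hne]
        · simp [x, h0, h1]
    simp only [this, Finset.sum_add_distrib, Finset.sum_ite_eq', Finset.mem_univ, if_true]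
    have : c^2 = 1/2 := Real.sq_sqrt (by norm_num)
    rw [this]; norm_num
  exact ⟨_, x, hs, hsq, rfl⟩

lemma ss_nonneg (hN : 2 ≤ N) (hnonneg : ∀ i j, 0 ≤ W i j) (hrow : ∀ i, ∑ j, W i j = 1)
    (hcol : ∀ j, ∑ i, W i j = 1) : 0 ≤ secondSingular W := by
  obtain ⟨r, hr⟩ := ss_nonempty W hN
  obtain ⟨x, h1, h2, rfl⟩ := hr
  exact le_trans (Real.sqrt_nonneg _)
    (le_csSup (ss_bdd W hnonneg hrow hcol) ⟨x, h1, h2, rfl⟩)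

lemma ss_contract (hN : 2 ≤ N) (hnonneg : ∀ i j, 0 ≤ W i j) (hrow : ∀ i, ∑ j, W i j = 1)
    (hcol : ∀ j, ∑ i, W i j = 1) (x : Fin N → ℝ) (hx : (∑ i, x i) = 0) :
    ∑ i, (W.mulVec x i)^2 ≤ (secondSingular W)^2 * ∑ i, (x i)^2 := by
  set S := ∑ i, (x i)^2 with hS
  have hS0 : 0 ≤ S := Finset.sum_nonneg fun i _ => sq_nonneg _
  rcases eq_or_lt_of_le hS0 with hz | hpos
  · -- x = 0
    have hx0 : ∀ i, x i = 0 := by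
      intro i
      have := (Finset.sum_eq_zero_iff_of_nonneg (fun i _ => sq_nonneg (x i))).1 hz.symm i
        (Finset.mem_univ i)
      exact pow_eq_zero_iff (n := 2) (by norm_num) |>.1 this
    have : ∀ i, W.mulVec x i = 0 := by
      intro i; simp [Matrix.mulVec, dotProduct]
      exact Finset.sum_eq_zero fun j _ => by rw [hx0 j, mul_zero]
    simp [this, ← hz]
  · set s := Real.sqrt S with hs
    have hspos : 0 < s := Real.sqrt_pos.2 hpos
    set y : Fin N → ℝ := fun i => s⁻¹ * x i with hy
    have hy1 : (∑ i, y i) = 0 := by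
      simp [y, ← Finset.mul_sum, hx]
    have hy2 : (∑ i, (y i)^2) = 1 := by
      simp only [y, mul_pow, ← Finset.mul_sum, ← hS]
      rw [show s⁻¹^2 * S = (S / s^2) by ring, Real.sq_sqrt hS0, div_self hpos.ne']
    have hmem : Real.sqrt (∑ i, (W.mulVec y i)^2) ≤ secondSingular W :=
      le_csSup (ss_bdd W hnonneg hrow hcol) ⟨y, hy1, hy2, rfl⟩
    have hA0 : 0 ≤ ∑ i, (W.mulVec y i)^2 := Finset.sum_nonneg fun i _ => sq_nonneg _
    have hysq : ∑ i, (W.mulVec y i)^2 ≤ (secondSingular W)^2 := by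
      calc ∑ i, (W.mulVec y i)^2 = (Real.sqrt (∑ i, (W.mulVec y i)^2))^2 :=
            (Real.sq_sqrt hA0).symm
        _ ≤ (secondSingular W)^2 := pow_le_pow_left₀ (Real.sqrt_nonneg _) hmem 2
    have hWy : ∀ i, W.mulVec y i = s⁻¹ * W.mulVec x i := by
      intro i
      simp only [Matrix.mulVec, dotProduct, y]
      rw [Finset.mul_sum]
      exact Finset.sum_congr rfl fun j _ => by ring
    have hxy : ∑ i, (W.mulVec x i)^2 = s^2 * ∑ i, (W.mulVec y i)^2 := by
      rw [Finset.mul_sum]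
      refine Finset.sum_congr rfl fun i _ => ?_
      rw [hWy i, mul_pow]
      field_simp
    rw [hxy]
    have hs2 : s^2 = S := Real.sq_sqrt hS0
    calc s^2 * ∑ i, (W.mulVec y i)^2 ≤ s^2 * (secondSingular W)^2 :=
          mul_le_mul_of_nonneg_left hysq (sq_nonneg s)
      _ = (secondSingular W)^2 * S := by rw [hs2]; ring

lemma sum_mulVec_transpose (hrow : ∀ i, ∑ j, W i j = 1) (x : Fin N → ℝ)
    (hx : (∑ i, x i) = 0) : ∑ i, Wᵀ.mulVec x i = 0 := by
  simp only [Matrix.mulVec, dotProduct, Matrix.transpose_apply]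
  rw [Finset.sum_comm]
  calc ∑ j, ∑ i, W j i * x j = ∑ j, x j * ∑ i, W j i := by
        refine Finset.sum_congr rfl fun j _ => ?_
        rw [Finset.mul_sum]
        exact Finset.sum_congr rfl fun i _ => by ring
    _ = 0 := by simp [hrow, hx]

lemma ssT_contract (hN : 2 ≤ N) (hnonneg : ∀ i j, 0 ≤ W i j) (hrow : ∀ i, ∑ j, W i j = 1)
    (hcol : ∀ j, ∑ i, W i j = 1) (x : Fin N → ℝ) (hx : (∑ i, x i) = 0) :
    ∑ i, (Wᵀ.mulVec x i)^2 ≤ (secondSingular W)^2 * ∑ i, (x i)^2 := by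
  set y := Wᵀ.mulVec x with hy
  set A := ∑ i, (y i)^2 with hA
  have hA0 : 0 ≤ A := Finset.sum_nonneg fun i _ => sq_nonneg _
  have hy0 : (∑ i, y i) = 0 := sum_mulVec_transpose W hrow x hx
  have key : A = ∑ j, x j * W.mulVec y j := by
    have e0 : ∀ i, y i = ∑ j, W j i * x j := by
      intro i; simp [hy, Matrix.mulVec, dotProduct, Matrix.transpose_apply]
    have e : ∀ i, y i ^ 2 = (∑ j, W j i * x j) * y i := by
      intro i; rw [sq, e0 i]
    calc A = ∑ i, (∑ j, W j i * x j) * y i := Finset.sum_congr rfl fun i _ => e i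
      _ = ∑ i, ∑ j, (W j i * x j) * y i := by
          refine Finset.sum_congr rfl fun i _ => ?_
          rw [Finset.sum_mul]
      _ = ∑ j, ∑ i, (W j i * x j) * y i := Finset.sum_comm
      _ = ∑ j, x j * ∑ i, W j i * y i := by
          refine Finset.sum_congr rfl fun j _ => ?_
          rw [Finset.mul_sum]
          exact Finset.sum_congr rfl fun i _ => by ring
      _ = ∑ j, x j * W.mulVec y j := rfl
  have hcs : (∑ j, x j * W.mulVec y j)^2 ≤ (∑ j, (x j)^2) * ∑ j, (W.mulVec y j)^2 :=
    Finset.sum_mul_sq_le_sq_mul_sq _ _ _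
  have hWy : ∑ j, (W.mulVec y j)^2 ≤ (secondSingular W)^2 * A :=
    ss_contract W hN hnonneg hrow hcol y hy0
  have hx2 : 0 ≤ ∑ j, (x j)^2 := Finset.sum_nonneg fun j _ => sq_nonneg _
  have hA2 : A^2 ≤ (secondSingular W)^2 * (∑ j, (x j)^2) * A := by
    calc A^2 = (∑ j, x j * W.mulVec y j)^2 := by rw [key]
      _ ≤ (∑ j, (x j)^2) * ∑ j, (W.mulVec y j)^2 := hcs
      _ ≤ (∑ j, (x j)^2) * ((secondSingular W)^2 * A) :=
          mul_le_mul_of_nonneg_left hWy hx2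
      _ = (secondSingular W)^2 * (∑ j, (x j)^2) * A := by ring
  rcases eq_or_lt_of_le hA0 with hz | hpos
  · rw [← hz]
    positivity
  · show A ≤ (secondSingular W)^2 * ∑ i, (x i)^2
    nlinarith [hA2, hpos]

lemma ssT_pow_contract (hN : 2 ≤ N) (hnonneg : ∀ i j, 0 ≤ W i j)
    (hrow : ∀ i, ∑ j, W i j = 1) (hcol : ∀ j, ∑ i, W i j = 1) (k : ℕ) (x : Fin N → ℝ)
    (hx : (∑ i, x i) = 0) :
    ∑ i, ((Wᵀ ^ k).mulVec x i)^2 ≤ ((secondSingular W)^2)^k * ∑ i, (x i)^2 := by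
  induction k generalizing x with
  | zero => simp [Matrix.mulVec_one]
  | succ k ih =>
    have hstep := ssT_contract W hN hnonneg hrow hcol x hx
    have hz := sum_mulVec_transpose W hrow x hx
    have : (Wᵀ ^ (k+1)).mulVec x = (Wᵀ ^ k).mulVec (Wᵀ.mulVec x) := by
      rw [pow_succ, Matrix.mulVec_mulVec]
    rw [this]
    calc ∑ i, ((Wᵀ ^ k).mulVec (Wᵀ.mulVec x) i)^2
        ≤ ((secondSingular W)^2)^k * ∑ i, (Wᵀ.mulVec x i)^2 := ih _ hz
      _ ≤ ((secondSingular W)^2)^k * ((secondSingular W)^2 * ∑ i, (x i)^2) :=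
          mul_le_mul_of_nonneg_left hstep (by positivity)
      _ = ((secondSingular W)^2)^(k+1) * ∑ i, (x i)^2 := by ring


lemma pow_ds (hnonneg : ∀ i j, 0 ≤ W i j) (hrow : ∀ i, ∑ j, W i j = 1)
    (hcol : ∀ j, ∑ i, W i j = 1) (k : ℕ) :
    (∀ i j, 0 ≤ (W^k) i j) ∧ (∀ i, ∑ j, (W^k) i j = 1) ∧ (∀ j, ∑ i, (W^k) i j = 1) := by
  induction k with
  | zero =>
    refine ⟨fun i j => ?_, fun i => ?_, fun j => ?_⟩ <;>
      simp [Matrix.one_apply] <;> positivity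
  | succ k ih =>
    obtain ⟨ihn, ihr, ihc⟩ := ih
    have he : ∀ i j, (W^(k+1)) i j = ∑ m, (W^k) i m * W m j := by
      intro i j; rw [pow_succ, Matrix.mul_apply]
    refine ⟨fun i j => ?_, fun i => ?_, fun j => ?_⟩
    · rw [he]
      exact Finset.sum_nonneg fun m _ => mul_nonneg (ihn i m) (hnonneg m j)
    · simp only [he]
      rw [Finset.sum_comm]
      calc ∑ m, ∑ j, (W^k) i m * W m j = ∑ m, (W^k) i m * ∑ j, W m j := by
            refine Finset.sum_congr rfl fun m _ => (Finset.mul_sum _ _ _).symm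
        _ = 1 := by simp [hrow, ihr i]
    · simp only [he]
      rw [Finset.sum_comm]
      calc ∑ m, ∑ i, (W^k) i m * W m j = ∑ m, (∑ i, (W^k) i m) * W m j := by
            refine Finset.sum_congr rfl fun m _ => (Finset.sum_mul _ _ _).symm
        _ = 1 := by simp [ihc, hcol j]

lemma l1_sqrt_bound (hN : 2 ≤ N) (hnonneg : ∀ i j, 0 ≤ W i j)
    (hrow : ∀ i, ∑ j, W i j = 1) (hcol : ∀ j, ∑ i, W i j = 1) (i : Fin N) (k : ℕ) :
    ∑ j, |(W^k) i j - 1/(N:ℝ)| ≤ Real.sqrt N * (secondSingular W)^k := by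
  have hN2 : (2:ℝ) ≤ (N:ℝ) := by exact_mod_cast hN
  have hN0 : (0:ℝ) < N := by linarith
  have hσ0 : 0 ≤ secondSingular W := ss_nonneg W hN hnonneg hrow hcol
  obtain ⟨hkn, hkr, hkc⟩ := pow_ds W hnonneg hrow hcol k
  set x : Fin N → ℝ := fun m => (if m = i then 1 else 0) - 1/N with hxdef
  have hsum_ite : (∑ m, (if m = i then (1:ℝ) else 0)) = 1 := by simp
  have hxsum : ∑ m, x m = 0 := by
    simp only [hxdef, Finset.sum_sub_distrib, hsum_ite, Finset.sum_const, Finset.card_univ,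
      Fintype.card_fin, nsmul_eq_mul]
    field_simp
    ring
  have hxsq : ∑ m, (x m)^2 ≤ 1 := by
    have e : ∀ m, (x m)^2
        = (if m = i then (1:ℝ) else 0) - (2/N)*(if m = i then 1 else 0) + (1/N)^2 := by
      intro m; by_cases h : m = i <;> simp [hxdef, h] <;> ring
    have hNN : (N:ℝ) * (1/N)^2 = 1/N := by field_simp
    calc ∑ m, (x m)^2
        = ∑ m, ((if m = i then (1:ℝ) else 0) - (2/N)*(if m = i then 1 else 0) + (1/N)^2) :=
          Finset.sum_congr rfl fun m _ => e m
      _ = 1 - (2/N)*1 + N*(1/N)^2 := by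
          rw [Finset.sum_add_distrib, Finset.sum_sub_distrib, hsum_ite, ← Finset.mul_sum,
            hsum_ite]
          simp [Finset.card_univ]
      _ ≤ 1 := by
          rw [hNN]
          have h1 : (0:ℝ) < 1/N := by positivity
          have h2 : (1:ℝ)/N ≤ 2/N := by gcongr <;> norm_num
          linarith
  set y : Fin N → ℝ := (Wᵀ^k).mulVec x with hydef
  have hyval : ∀ j, y j = (W^k) i j - 1/N := by
    intro j
    have ht : (Wᵀ^k) = (W^k)ᵀ := (Matrix.transpose_pow W k).symm
    simp only [hydef, ht, Matrix.mulVec, dotProduct, Matrix.transpose_apply, hxdef]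
    have e : ∀ m, (W^k) m j * ((if m = i then (1:ℝ) else 0) - 1/N)
        = (if m = i then (W^k) m j else 0) - (W^k) m j * (1/N) := by
      intro m; by_cases h : m = i <;> simp [h] <;> ring
    rw [Finset.sum_congr rfl fun m _ => e m, Finset.sum_sub_distrib, Finset.sum_ite_eq',
      ← Finset.sum_mul, hkc j]
    simp
  have hysq : ∑ j, (y j)^2 ≤ ((secondSingular W)^2)^k := by
    calc ∑ j, (y j)^2 ≤ ((secondSingular W)^2)^k * ∑ m, (x m)^2 :=
          ssT_pow_contract W hN hnonneg hrow hcol k x hxsum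
      _ ≤ ((secondSingular W)^2)^k * 1 := mul_le_mul_of_nonneg_left hxsq (by positivity)
      _ = _ := mul_one _
  have hcs : (∑ j, |y j|)^2 ≤ (N:ℝ) * ∑ j, (y j)^2 := by
    have := Finset.sum_mul_sq_le_sq_mul_sq Finset.univ (fun _ : Fin N => (1:ℝ))
      (fun j => |y j|)
    simpa [Finset.card_univ, sq_abs] using this
  have habs0 : 0 ≤ ∑ j, |y j| := Finset.sum_nonneg fun j _ => abs_nonneg _
  have final : ∑ j, |y j| ≤ Real.sqrt N * (secondSingular W)^k := by
    have h2 : (∑ j, |y j|)^2 ≤ (N:ℝ) * ((secondSingular W)^2)^k :=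
      le_trans hcs (mul_le_mul_of_nonneg_left hysq hN0.le)
    calc ∑ j, |y j| = Real.sqrt ((∑ j, |y j|)^2) := (Real.sqrt_sq habs0).symm
      _ ≤ Real.sqrt ((N:ℝ) * ((secondSingular W)^2)^k) := Real.sqrt_le_sqrt h2
      _ = Real.sqrt N * (secondSingular W)^k := by
          rw [Real.sqrt_mul hN0.le,
            show ((secondSingular W)^2)^k = ((secondSingular W)^k)^2 by ring,
            Real.sqrt_sq (by positivity)]
  calc ∑ j, |(W^k) i j - 1/(N:ℝ)| = ∑ j, |y j| :=
        (Finset.sum_congr rfl fun j _ => by rw [hyval j]).symm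
    _ ≤ _ := final

lemma l1_two_bound (hN : 2 ≤ N) (hnonneg : ∀ i j, 0 ≤ W i j)
    (hrow : ∀ i, ∑ j, W i j = 1) (hcol : ∀ j, ∑ i, W i j = 1) (i : Fin N) (k : ℕ) :
    ∑ j, |(W^k) i j - 1/(N:ℝ)| ≤ 2 := by
  have hN2 : (2:ℝ) ≤ (N:ℝ) := by exact_mod_cast hN
  have hN0 : (0:ℝ) < N := by linarith
  obtain ⟨hkn, hkr, hkc⟩ := pow_ds W hnonneg hrow hcol k
  have hinv : (0:ℝ) < 1/N := by positivity
  calc ∑ j, |(W^k) i j - 1/(N:ℝ)| ≤ ∑ j, ((W^k) i j + 1/N) := by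
        refine Finset.sum_le_sum fun j _ => ?_
        have := hkn i j
        exact abs_le.2 ⟨by linarith, by linarith⟩
    _ = 1 + N * (1/N) := by
        rw [Finset.sum_add_distrib, hkr i]
        simp [Finset.card_univ]
    _ = 2 := by field_simp; norm_num

lemma geom_le' {r : ℝ} (h0 : 0 ≤ r) (h1 : r < 1) (n : ℕ) :
    ∑ k ∈ Finset.range n, r^k ≤ 1/(1-r) := by
  have hd : 0 < 1 - r := by linarith
  rw [le_div_iff₀ hd]
  have h := geom_sum_mul r n
  have hp : 0 ≤ r^n := pow_nonneg h0 n
  have e : (∑ i ∈ Finset.range n, r ^ i) * (1 - r) = 1 - r^n := by linear_combination -h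
  rw [e]; linarith

lemma min_le_rpow {b α : ℝ} (hb : 0 ≤ b) (hα0 : 0 < α) (hα1 : α ≤ 1) :
    min 2 b ≤ 2^(1-α) * b^α := by
  rcases eq_or_lt_of_le hb with hb0 | hbpos
  · rw [← hb0, Real.zero_rpow hα0.ne', mul_zero]
    exact le_trans (min_le_right _ _) le_rfl
  · rcases le_total b 2 with h | h
    · calc min 2 b ≤ b := min_le_right _ _
        _ = b^α * b^(1-α) := by
            rw [← Real.rpow_add hbpos, show α + (1-α) = 1 by ring, Real.rpow_one]
        _ ≤ b^α * 2^(1-α) := by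
            refine mul_le_mul_of_nonneg_left ?_ (Real.rpow_nonneg hbpos.le α)
            exact Real.rpow_le_rpow hbpos.le h (by linarith)
        _ = 2^(1-α) * b^α := mul_comm _ _
    · calc min 2 b ≤ 2 := min_le_left _ _
        _ = 2^α * 2^(1-α) := by
            rw [← Real.rpow_add (by norm_num : (0:ℝ) < 2), show α + (1-α) = 1 by ring,
              Real.rpow_one]
        _ ≤ b^α * 2^(1-α) := by
            refine mul_le_mul_of_nonneg_right ?_ (Real.rpow_nonneg (by norm_num) _)
            exact Real.rpow_le_rpow (by norm_num) h hα0.le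
        _ = 2^(1-α) * b^α := mul_comm _ _

lemma main_bound (hN : 2 ≤ N) (hnonneg : ∀ i j, 0 ≤ W i j)
    (hrow : ∀ i, ∑ j, W i j = 1) (hcol : ∀ j, ∑ i, W i j = 1)
    (hσ : secondSingular W < 1) {α : ℝ} (hα0 : 0 < α) (hα1 : α ≤ 1) (i : Fin N) (t : ℕ) :
    ∑ τ ∈ Finset.Icc 1 t, ∑ j, |(W ^ (t - τ)) i j - 1 / (N:ℝ)|
      ≤ 2^(1-α) * (Real.sqrt N)^α / (α * (1 - secondSingular W)) := by
  set σ := secondSingular W with hσdef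
  have hσ0 : 0 ≤ σ := ss_nonneg W hN hnonneg hrow hcol
  have hσα1 : σ^α < 1 := Real.rpow_lt_one hσ0 hσ hα0
  have hσα0 : 0 ≤ σ^α := Real.rpow_nonneg hσ0 α
  set C := (2:ℝ)^(1-α) * (Real.sqrt N)^α with hCdef
  have hC0 : 0 ≤ C := mul_nonneg (Real.rpow_nonneg (by norm_num) _)
    (Real.rpow_nonneg (Real.sqrt_nonneg _) _)
  have hpowcomm : ∀ k : ℕ, ((σ:ℝ)^k)^α = (σ^α)^k := by
    intro k
    rw [← Real.rpow_natCast σ k, ← Real.rpow_natCast (σ^α) k, ← Real.rpow_mul hσ0,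
      ← Real.rpow_mul hσ0, mul_comm]
  have hf : ∀ k : ℕ, ∑ j, |(W ^ k) i j - 1 / (N:ℝ)| ≤ C * (σ^α)^k := by
    intro k
    have h1 := l1_sqrt_bound W hN hnonneg hrow hcol i k
    have h2 := l1_two_bound W hN hnonneg hrow hcol i k
    have hmin : ∑ j, |(W ^ k) i j - 1 / (N:ℝ)| ≤ min 2 (Real.sqrt N * σ^k) :=
      le_min h2 h1
    have hb0 : 0 ≤ Real.sqrt N * σ^k := mul_nonneg (Real.sqrt_nonneg _) (pow_nonneg hσ0 k)
    calc ∑ j, |(W ^ k) i j - 1 / (N:ℝ)| ≤ min 2 (Real.sqrt N * σ^k) := hmin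
      _ ≤ 2^(1-α) * (Real.sqrt N * σ^k)^α := min_le_rpow hb0 hα0 hα1
      _ = C * (σ^α)^k := by
          rw [Real.mul_rpow (Real.sqrt_nonneg _) (pow_nonneg hσ0 k), hpowcomm k, hCdef]
          ring
  have reindex : ∑ τ ∈ Finset.Icc 1 t, ∑ j, |(W ^ (t - τ)) i j - 1 / (N:ℝ)|
      = ∑ k ∈ Finset.range t, ∑ j, |(W ^ k) i j - 1 / (N:ℝ)| := by
    refine Finset.sum_nbij' (fun τ => t - τ) (fun k => t - k) ?_ ?_ ?_ ?_ ?_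
    · intro a ha
      simp only [Finset.mem_Icc] at ha
      simp only [Finset.mem_range]
      omega
    · intro a ha
      simp only [Finset.mem_range] at ha
      simp only [Finset.mem_Icc]
      omega
    · intro a ha
      simp only [Finset.mem_Icc] at ha
      show t - (t - a) = a
      omega
    · intro a ha
      simp only [Finset.mem_range] at ha
      show t - (t - a) = a
      omega
    · intro a ha
      rfl
  rw [reindex]
  calc ∑ k ∈ Finset.range t, ∑ j, |(W ^ k) i j - 1 / (N:ℝ)|
      ≤ ∑ k ∈ Finset.range t, C * (σ^α)^k := Finset.sum_le_sum fun k _ => hf k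
    _ = C * ∑ k ∈ Finset.range t, (σ^α)^k := by rw [Finset.mul_sum]
    _ ≤ C * (1/(1 - σ^α)) := mul_le_mul_of_nonneg_left (geom_le' hσα0 hσα1 t) hC0
    _ = C / (1 - σ^α) := by ring
    _ ≤ C / (α * (1 - σ)) := by
        have hden : 0 < α * (1 - σ) := mul_pos hα0 (by linarith)
        have hamgm : σ^α ≤ α * σ + (1 - α) := by
          have := Real.geom_mean_le_arith_mean2_weighted hα0.le (by linarith : (0:ℝ) ≤ 1 - α)
            hσ0 zero_le_one (by ring)
          simpa [Real.one_rpow] using this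
        have hkey : α * (1 - σ) ≤ 1 - σ^α := by nlinarith
        gcongr
  

end A


theorem consensus_geometric_ergodicity
    (N : ℕ) (hN : 2 ≤ N) (W : Matrix (Fin N) (Fin N) ℝ)
    (hnonneg : ∀ i j, 0 ≤ W i j)
    (hrow : ∀ i, ∑ j, W i j = 1)
    (hcol : ∀ j, ∑ i, W i j = 1)
    (hconn : ∀ i j, ∃ k : ℕ, 0 < (W ^ k) i j)
    (hσ : secondSingular W < 1) :
    ∀ (i : Fin N) (t : ℕ),
      ∑ τ ∈ Finset.Icc 1 t, ∑ j, |(W ^ (t - τ)) i j - 1 / N|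
        ≤ 4 * Real.log N / (1 - secondSingular W) := by
  intro i t
  have hσ0 : 0 ≤ secondSingular W := ss_nonneg W hN hnonneg hrow hcol
  have hden : 0 < 1 - secondSingular W := by linarith
  rcases eq_or_lt_of_le hN with rfl | hN3
  · -- N = 2
    have h := main_bound W hN hnonneg hrow hcol hσ (α := 1) one_pos le_rfl i t
    norm_num [Real.rpow_one] at h ⊢
    refine le_trans h ?_
    have hsqrt2 : Real.sqrt 2 ≤ 4 * Real.log 2 := by
      nlinarith [Real.log_two_gt_d9, Real.sq_sqrt (show (0:ℝ) ≤ 2 by norm_num),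
        Real.sqrt_nonneg 2, sq_nonneg (Real.sqrt 2 - 1.5)]
    gcongr
  · -- 3 ≤ N
    have hN3' : (3:ℕ) ≤ N := hN3
    have hNr : (3:ℝ) ≤ N := by exact_mod_cast hN3'
    have hNpos : (0:ℝ) < N := by linarith
    have hlog : 1 < Real.log N := by
      rw [Real.lt_log_iff_exp_lt hNpos]
      calc Real.exp 1 < 2.7182818286 := Real.exp_one_lt_d9
        _ ≤ 3 := by norm_num
        _ ≤ N := hNr
    set α := (Real.log N)⁻¹ with hαdef
    have hlogpos : 0 < Real.log N := by linarith
    have hα0 : 0 < α := inv_pos.2 hlogpos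
    have hα1 : α ≤ 1 := by
      rw [hαdef]
      exact inv_le_one_of_one_le₀ hlog.le
    have h := main_bound W hN hnonneg hrow hcol hσ hα0 hα1 i t
    have hsqrtpos : 0 < Real.sqrt N := Real.sqrt_pos.2 hNpos
    have hs : (Real.sqrt N)^α = Real.exp (1/2) := by
      rw [Real.rpow_def_of_pos hsqrtpos, Real.log_sqrt hNpos.le]
      congr 1
      field_simp [hαdef]
      rw [hαdef]; field_simp
    have he : Real.exp (1/2) * Real.exp (1/2) = Real.exp 1 := by
      rw [← Real.exp_add]; norm_num
    have hexp2 : Real.exp (1/2) ≤ 2 := by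
      nlinarith [Real.exp_one_lt_d9, Real.exp_pos (1/2:ℝ), he]
    have h2a : (2:ℝ)^(1-α) ≤ 2 := by
      calc (2:ℝ)^(1-α) ≤ (2:ℝ)^(1:ℝ) :=
            Real.rpow_le_rpow_of_exponent_le (by norm_num) (by linarith)
        _ = 2 := Real.rpow_one 2
    have hC4 : (2:ℝ)^(1-α) * (Real.sqrt N)^α ≤ 4 := by
      rw [hs]
      nlinarith [Real.rpow_nonneg (show (0:ℝ) ≤ 2 by norm_num) (1-α), Real.exp_pos (1/2:ℝ)]
    refine le_trans h ?_
    have hα : α * (1 - secondSingular W) = (1 - secondSingular W) / Real.log N := by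
      rw [hαdef]; field_simp
    rw [hα, div_div_eq_mul_div]
    gcongr
end
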